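/- arXiv:2006.14783 — 2 statements merged into one kernel-verified Lean document; each statement's English description precedes it below -/
import Mathlib

section
/- Let A = (a_{ij})_{i,j∈I} be a symmetrizable generalized Cartan matrix (a_{ii} = 2, a_{ij} ∈ ℤ_{≤0} for i ≠ j, a_{ij} = 0 ⟺ a_{ji} = 0), and let μ be an automorphism of A (a permutation of I with a_{μ(i)μ(j)} = a_{ij}). Fix i ∈ I, let 𝒪(i) = {μ^k(i)} be its orbit and N_i = |𝒪(i)|. Then Σ_{p ∈ 𝒪(i)} a_{p,i} > 0 if and only if one of the following holds: (i) a_{μ^k(i), i} = 0 for all k with μ^k(i) ≠ i; or (ii) N_i is even, a_{μ^{N_i/2}(i), i} = −1, and a_{μ^k(i), i} = 0 for all k ≢ 0, N_i/2 (mod N_i). In case (i) the sum equals 2 and in case (ii) it equals 1. -/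
theorem stmt_13 (I : Type*) [Fintype I] [DecidableEq I]
    (A : I → I → ℤ)
    (hdiag : ∀ i, A i i = 2)
    (hoff : ∀ i j, i ≠ j → A i j ≤ 0)
    (hzero : ∀ i j, A i j = 0 ↔ A j i = 0)
    (r : I → ℤ) (hr : ∀ i, 0 < r i) (hsym : ∀ i j, r i * A i j = r j * A j i)
    (μ : Equiv.Perm I) (hμ : ∀ a b, A (μ a) (μ b) = A a b)
    (i : I) (O : Finset I) (hO : ∀ p, p ∈ O ↔ ∃ k : ℕ, (μ ^ k) i = p) :
    (0 < ∑ p ∈ O, A p i ↔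
      ((∀ p ∈ O, p ≠ i → A p i = 0) ∨
       (Even O.card ∧ A ((μ ^ (O.card / 2)) i) i = -1 ∧
        ∀ k : ℕ, k % O.card ≠ 0 → k % O.card ≠ O.card / 2 → A ((μ ^ k) i) i = 0))) ∧
    ((∀ p ∈ O, p ≠ i → A p i = 0) → ∑ p ∈ O, A p i = 2) ∧
    ((Even O.card ∧ A ((μ ^ (O.card / 2)) i) i = -1 ∧
        ∀ k : ℕ, k % O.card ≠ 0 → k % O.card ≠ O.card / 2 → A ((μ ^ k) i) i = 0) →
      ∑ p ∈ O, A p i = 1) := by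
  classical
  -- iterated invariance of A
  have hμk : ∀ (m : ℕ) (a b : I), A ((μ ^ m) a) ((μ ^ m) b) = A a b := by
    intro m
    induction m with
    | zero => intro a b; simp
    | succ m ih =>
      intro a b
      rw [pow_succ]
      simp only [Equiv.Perm.mul_apply]
      rw [ih, hμ]
  -- pow vs iterate
  have hpow : ∀ (k : ℕ) (x : I), (μ ^ k) x = (⇑μ)^[k] x := by
    intro k x
    rw [← Equiv.Perm.coe_pow]
  -- i is a periodic point
  have hper : i ∈ Function.periodicPts μ := by
    refine ⟨orderOf μ, orderOf_pos μ, ?_⟩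
    show (⇑μ)^[orderOf μ] i = i
    rw [← hpow, pow_orderOf_eq_one]; rfl
  set n := Function.minimalPeriod μ i with hn
  have hn0 : 0 < n := Function.minimalPeriod_pos_of_mem_periodicPts hper
  have hμn : (μ ^ n) i = i := by rw [hpow]; exact Function.iterate_minimalPeriod
  have hmod : ∀ k : ℕ, (μ ^ (k % n)) i = (μ ^ k) i := by
    intro k; rw [hpow, hpow]; exact Function.iterate_mod_minimalPeriod_eq
  have hinj : ∀ a ∈ Finset.range n, ∀ b ∈ Finset.range n,
      (μ ^ a) i = (μ ^ b) i → a = b := by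
    intro a ha b hb hab
    rw [Finset.mem_range] at ha hb
    exact Function.iterate_injOn_Iio_minimalPeriod ha hb
      (by simpa only [← hpow] using hab)
  -- O as image of range n
  have hOeq : O = (Finset.range n).image (fun k => (μ ^ k) i) := by
    ext p
    rw [hO, Finset.mem_image]
    constructor
    · rintro ⟨k, rfl⟩
      exact ⟨k % n, Finset.mem_range.2 (Nat.mod_lt _ hn0), hmod k⟩
    · rintro ⟨k, -, rfl⟩; exact ⟨k, rfl⟩
  have hcard : O.card = n := by
    rw [hOeq, Finset.card_image_of_injOn (fun a ha b hb => hinj a ha b hb), Finset.card_range]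
  have hsum : ∑ p ∈ O, A p i = ∑ k ∈ Finset.range n, A ((μ ^ k) i) i := by
    rw [hOeq, Finset.sum_image hinj]
  -- basic facts about g k = A ((μ^k) i) i
  have hg0 : A ((μ ^ 0) i) i = 2 := by simpa using hdiag i
  have hne : ∀ k : ℕ, 0 < k → k < n → (μ ^ k) i ≠ i := by
    intro k hk1 hk2 h
    have : k = 0 := hinj k (Finset.mem_range.2 hk2) 0 (Finset.mem_range.2 hn0)
      (by simpa using h)
    omega
  have hle : ∀ k ∈ Finset.Ico 1 n, A ((μ ^ k) i) i ≤ 0 := by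
    intro k hk
    rw [Finset.mem_Ico] at hk
    exact hoff _ _ (hne k hk.1 hk.2)
  have hsymm : ∀ k : ℕ, k ≤ n → A i ((μ ^ k) i) = A ((μ ^ (n - k)) i) i := by
    intro k hk
    have h1 := hμk (n - k) i ((μ ^ k) i)
    have h2 : (μ ^ (n - k)) ((μ ^ k) i) = i := by
      rw [← Equiv.Perm.mul_apply, ← pow_add, Nat.sub_add_cancel hk, hμn]
    rw [h2] at h1
    exact h1.symm
  -- split the sum
  have hsplit : ∑ k ∈ Finset.range n, A ((μ ^ k) i) i
      = 2 + ∑ k ∈ Finset.Ico 1 n, A ((μ ^ k) i) i := by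
    rw [Finset.range_eq_Ico, Finset.sum_eq_sum_Ico_succ_bot hn0, hg0]
  -- Part 2: case (i) gives sum 2
  have part2 : (∀ p ∈ O, p ≠ i → A p i = 0) → ∑ p ∈ O, A p i = 2 := by
    intro h
    rw [hsum, hsplit]
    have : ∑ k ∈ Finset.Ico 1 n, A ((μ ^ k) i) i = 0 := by
      refine Finset.sum_eq_zero fun k hk => ?_
      rw [Finset.mem_Ico] at hk
      exact h _ ((hO _).2 ⟨k, rfl⟩) (hne k hk.1 hk.2)
    rw [this]; norm_num
  -- Part 3: case (ii) gives sum 1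
  have part3 : (Even O.card ∧ A ((μ ^ (O.card / 2)) i) i = -1 ∧
      ∀ k : ℕ, k % O.card ≠ 0 → k % O.card ≠ O.card / 2 → A ((μ ^ k) i) i = 0) →
      ∑ p ∈ O, A p i = 1 := by
    rintro ⟨heven, hval, hz⟩
    rw [hcard] at heven hval hz
    have hn2 : 2 ≤ n := by
      rcases heven with ⟨m, hm⟩; omega
    have hmem : n / 2 ∈ Finset.Ico 1 n := by
      rw [Finset.mem_Ico]; omega
    have hT : ∑ k ∈ Finset.Ico 1 n, A ((μ ^ k) i) i = -1 := by
      rw [Finset.sum_eq_single_of_mem _ hmem, hval]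
      intro b hb hb'
      rw [Finset.mem_Ico] at hb
      have hbmod : b % n = b := Nat.mod_eq_of_lt hb.2
      exact hz b (by omega) (by omega)
    rw [hsum, hsplit, hT]; norm_num
  refine ⟨?_, part2, part3⟩
  constructor
  · -- forward direction
    intro hpos
    rw [hsum, hsplit] at hpos
    set T := ∑ k ∈ Finset.Ico 1 n, A ((μ ^ k) i) i with hTdef
    have hTle : T ≤ 0 := Finset.sum_nonpos hle
    have hTge : -1 ≤ T := by omega
    rcases eq_or_lt_of_le hTle with hT0 | hTlt
    · -- T = 0 : case (i)
      left
      intro p hp hpne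
      obtain ⟨k, hk, rfl⟩ := Finset.mem_image.1 (hOeq ▸ hp)
      rw [Finset.mem_range] at hk
      have hk0 : 0 < k := by
        rcases Nat.eq_zero_or_pos k with h | h
        · subst h; simp at hpne
        · exact h
      exact (Finset.sum_eq_zero_iff_of_nonpos hle).1 hT0 k
        (Finset.mem_Ico.2 ⟨hk0, hk⟩)
    · -- T = -1 : case (ii)
      right
      have hTm1 : T = -1 := by omega
      -- there is a nonzero term
      obtain ⟨k0, hk0mem, hk0ne⟩ : ∃ k0 ∈ Finset.Ico 1 n, A ((μ ^ k0) i) i ≠ 0 := by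
        by_contra h
        push_neg at h
        have : T = 0 := Finset.sum_eq_zero h
        omega
      have hk0le : A ((μ ^ k0) i) i ≤ -1 := by
        have := hle k0 hk0mem; omega
      have hrestle : ∑ k ∈ (Finset.Ico 1 n).erase k0, A ((μ ^ k) i) i ≤ 0 :=
        Finset.sum_nonpos fun k hk => hle k (Finset.mem_of_mem_erase hk)
      have hadd : A ((μ ^ k0) i) i + ∑ k ∈ (Finset.Ico 1 n).erase k0, A ((μ ^ k) i) i = T := by
        rw [hTdef]
        exact Finset.add_sum_erase (Finset.Ico 1 n) (fun k => A ((μ ^ k) i) i) hk0mem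
      have hrest0 : ∑ k ∈ (Finset.Ico 1 n).erase k0, A ((μ ^ k) i) i = 0 := by omega
      have hk0val : A ((μ ^ k0) i) i = -1 := by omega
      have hz' : ∀ k ∈ (Finset.Ico 1 n).erase k0, A ((μ ^ k) i) i = 0 :=
        (Finset.sum_eq_zero_iff_of_nonpos
          (fun k hk => hle k (Finset.mem_of_mem_erase hk))).1 hrest0
      -- symmetry forces n - k0 = k0
      rw [Finset.mem_Ico] at hk0mem
      have hk0n : k0 ≤ n := le_of_lt hk0mem.2
      have hsym0 : A ((μ ^ (n - k0)) i) i ≠ 0 := by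
        rw [← hsymm k0 hk0n]
        intro h
        exact hk0ne ((hzero _ _).1 h)
      have hmem' : n - k0 ∈ Finset.Ico 1 n := by
        rw [Finset.mem_Ico]; omega
      have heqk0 : n - k0 = k0 := by
        by_contra h
        exact hsym0 (hz' _ (Finset.mem_erase.2 ⟨h, hmem'⟩))
      have hn2k0 : n = 2 * k0 := by omega
      refine ⟨?_, ?_, ?_⟩
      · rw [hcard]; exact ⟨k0, by omega⟩
      · rw [hcard]
        have : n / 2 = k0 := by omega
        rw [this]; exact hk0val
      · intro k hk1 hk2
        rw [hcard] at hk1 hk2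
        rw [← hmod k]
        have hmem'' : k % n ∈ (Finset.Ico 1 n).erase k0 := by
          rw [Finset.mem_erase, Finset.mem_Ico]
          have hlt : k % n < n := Nat.mod_lt _ hn0
          have hhalf : n / 2 = k0 := by omega
          constructor
          · omega
          · constructor
            · omega
            · exact Nat.mod_lt _ hn0
        exact hz' _ hmem''
  · -- backward direction
    rintro (h | h)
    · rw [part2 h]; norm_num
    · rw [part3 h]; norm_num
end

section
/- Let A = (a_{ij})_{i,j∈I} be a symmetrizable GCM with symmetrizing positive integers (r_i) (so r_i a_{ij} = r_j a_{ji}), and let μ be an automorphism of A of order N satisfying (LC1): Σ_{p∈𝒪(i)} a_{pi} > 0 for all i. For each i let N_i = |𝒪(i)|, let s_i = 1 if the orbit condition (i) of (LC1) holds and s_i = 2 if condition (ii) holds, and define ǎ_{ij} = s_i · Σ_{p∈𝒪(i)} a_{pj}. Fix a set Ǐ of orbit representatives. Then the folded matrix Ǎ = (ǎ_{ij})_{i,j∈Ǐ} is again a symmetrizable generalized Cartan matrix: ǎ_{ii} = 2, ǎ_{ij} ∈ ℤ_{≤0} for i ≠ j in Ǐ, ǎ_{ij} = 0 ⟺ ǎ_{ji}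 = 0, and the diagonal matrix with entries ř_i = N·r_i/(s_i·N_i) symmetrizes Ǎ, i.e. ř_i · ǎ_{ij} = ř_j · ǎ_{ji} for all i,j ∈ Ǐ. -/
/-- Orbit condition (i) of (LC1): the Dynkin subdiagram on the orbit of `i`
is a disjoint union of type `A₁` diagrams. -/
def condI {I : Type*} (A : I → I → ℤ) (O : I → Finset I) (i : I) : Prop :=
  ∀ p ∈ O i, p ≠ i → A p i = 0

/-- Orbit condition (ii) of (LC1): the Dynkin subdiagram on the orbit of `i`
is a disjoint union of type `A₂` diagrams. -/
def condII {I : Type*} (A : I → I → ℤ) (μ : Equiv.Perm I) (O : I → Finset I) (i : I) : Prop :=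
  Even (O i).card ∧ A ((μ ^ ((O i).card / 2)) i) i = -1 ∧
    ∀ k : ℕ, k % (O i).card ≠ 0 → k % (O i).card ≠ (O i).card / 2 →
      A ((μ ^ k) i) i = 0

private lemma sum_range_mul_periodic (g : ℕ → ℤ) (m t : ℕ)
    (hg : ∀ k, g (k + m) = g k) :
    ∑ k ∈ Finset.range (m * t), g k = t * ∑ k ∈ Finset.range m, g k := by
  have hshift : ∀ t x, g (m * t + x) = g x := by
    intro t
    induction t with
    | zero => simp
    | succ t ih2 =>
      intro x
      have h : m * (t + 1) + x = m * t + x + m := by ring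
      rw [h, hg, ih2]
  induction t with
  | zero => simp
  | succ t ih =>
    rw [Nat.mul_succ, Finset.sum_range_add, ih]
    have hshift' := hshift t
    simp only [hshift']
    push_cast
    ring

theorem stmt_14 (I : Type*) [Fintype I] [DecidableEq I]
    (A : I → I → ℤ)
    (hdiag : ∀ i, A i i = 2)
    (hoff : ∀ i j, i ≠ j → A i j ≤ 0)
    (hzero : ∀ i j, A i j = 0 ↔ A j i = 0)
    (r : I → ℤ) (hr : ∀ i, 0 < r i) (hsym : ∀ i j, r i * A i j = r j * A j i)
    (μ : Equiv.Perm I) (hμ : ∀ a b, A (μ a) (μ b) = A a b)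
    (hrμ : ∀ i, r (μ i) = r i)
    (N : ℕ) (hN : orderOf μ = N)
    (O : I → Finset I) (hO : ∀ i p, p ∈ O i ↔ ∃ k : ℕ, (μ ^ k) i = p)
    (hLC1 : ∀ i, 0 < ∑ p ∈ O i, A p i)
    (s : I → ℤ) (hs : ∀ i, (s i = 1 ∧ condI A O i) ∨ (s i = 2 ∧ condII A μ O i))
    (Irep : Finset I) (hIrep : ∀ i : I, ∃! j, j ∈ Irep ∧ i ∈ O j) :
    (∀ i ∈ Irep, s i * ∑ p ∈ O i, A p i = 2) ∧
    (∀ i ∈ Irep, ∀ j ∈ Irep, i ≠ j → s i * ∑ p ∈ O i, A p j ≤ 0) ∧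
    (∀ i ∈ Irep, ∀ j ∈ Irep,
      (s i * ∑ p ∈ O i, A p j = 0 ↔ s j * ∑ p ∈ O j, A p i = 0)) ∧
    (∀ i ∈ Irep, 0 < ((N : ℚ) * (r i : ℚ)) / ((s i : ℚ) * ((O i).card : ℚ))) ∧
    (∀ i ∈ Irep, ∀ j ∈ Irep,
      ((N : ℚ) * (r i : ℚ)) / ((s i : ℚ) * ((O i).card : ℚ)) *
          ((s i * ∑ p ∈ O i, A p j : ℤ) : ℚ)
        = ((N : ℚ) * (r j : ℚ)) / ((s j : ℚ) * ((O j).card : ℚ)) *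
          ((s j * ∑ p ∈ O j, A p i : ℤ) : ℚ)) := by
  classical
  have hN0 : 0 < N := hN ▸ orderOf_pos μ
  have hμN : μ ^ N = 1 := by rw [← hN]; exact pow_orderOf_eq_one μ
  have hμpow : ∀ (k : ℕ) (a b : I), A ((μ ^ k) a) ((μ ^ k) b) = A a b := by
    intro k
    induction k with
    | zero => simp
    | succ k ih =>
      intro a b
      rw [pow_succ, show ((μ ^ k * μ) a) = (μ ^ k) (μ a) from rfl,
        show ((μ ^ k * μ) b) = (μ ^ k) (μ b) from rfl, ih, hμ]
  have hrpow : ∀ (k : ℕ) (i : I), r ((μ ^ k) i) = r i := by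
    intro k
    induction k with
    | zero => simp
    | succ k ih =>
      intro i
      rw [pow_succ, show ((μ ^ k * μ) i) = (μ ^ k) (μ i) from rfl, ih, hrμ]
  have hmem : ∀ i, i ∈ O i := fun i => (hO i i).2 ⟨0, by simp⟩
  have horb : ∀ i (k : ℕ), (μ ^ k) i ∈ O i := fun i k => (hO i _).2 ⟨k, rfl⟩
  set m : I → ℕ := fun i => Function.minimalPeriod (⇑μ) i with hmdef
  have hperN : ∀ i, Function.IsPeriodicPt (⇑μ) N i := by
    intro i
    have h : (⇑μ)^[N] i = i := by
      rw [← Equiv.Perm.coe_pow, hμN]; rfl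
    exact h
  have hm0 : ∀ i, 0 < m i := fun i =>
    Function.minimalPeriod_pos_of_mem_periodicPts
      (Function.mk_mem_periodicPts hN0 (hperN i))
  have hmdvd : ∀ i, m i ∣ N := fun i =>
    Function.IsPeriodicPt.minimalPeriod_dvd (hperN i)
  have hmfix : ∀ i, (μ ^ (m i)) i = i := by
    intro i
    have h := Function.iterate_minimalPeriod (f := ⇑μ) (x := i)
    rwa [← Equiv.Perm.coe_pow] at h
  have hmodm : ∀ (i : I) (k : ℕ), (μ ^ (k % m i)) i = (μ ^ k) i := by
    intro i k
    exact Function.iterate_mod_minimalPeriod_eq (f := ⇑μ) (x := i) (n := k)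
  have hinjOn : ∀ i : I, ∀ x ∈ Finset.range (m i), ∀ y ∈ Finset.range (m i),
      (μ ^ x) i = (μ ^ y) i → x = y := by
    intro i x hx y hy hxy
    exact Function.iterate_injOn_Iio_minimalPeriod
      (Set.mem_Iio.mpr (Finset.mem_range.mp hx))
      (Set.mem_Iio.mpr (Finset.mem_range.mp hy)) hxy
  have hOimg : ∀ i, O i = (Finset.range (m i)).image (fun k => (μ ^ k) i) := by
    intro i
    ext p
    simp only [Finset.mem_image, Finset.mem_range, hO]
    constructor
    · rintro ⟨k, rfl⟩
      exact ⟨k % m i, Nat.mod_lt _ (hm0 i), hmodm i k⟩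
    · rintro ⟨k, -, hk⟩; exact ⟨k, hk⟩
  have hcard : ∀ i, (O i).card = m i := by
    intro i
    rw [hOimg i, Finset.card_image_of_injOn
      (fun x hx y hy => hinjOn i x (Finset.mem_coe.mp hx) y (Finset.mem_coe.mp hy)),
      Finset.card_range]
  have hsumO : ∀ i j : I, ∑ p ∈ O i, A p j = ∑ k ∈ Finset.range (m i), A ((μ ^ k) i) j := by
    intro i j
    rw [hOimg i]
    exact Finset.sum_image (fun x hx y hy => hinjOn i x hx y hy)
  -- diagonal entries
  have hdsum : ∀ i : I, s i * ∑ p ∈ O i, A p i = 2 := by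
    intro i
    rcases hs i with ⟨hs1, hc⟩ | ⟨hs2, hc⟩
    · rw [Finset.sum_eq_single_of_mem i (hmem i) (fun p hp hpi => hc p hp hpi), hdiag i, hs1,
        one_mul]
    · obtain ⟨heven, hhalf, hrest⟩ := hc
      have hn0 : 0 < (O i).card := Finset.card_pos.mpr ⟨i, hmem i⟩
      have hn2 : 2 ≤ (O i).card := by
        rcases heven with ⟨c, hc2⟩; omega
      have hone : ∑ p ∈ O i, A p i = 1 := by
        rw [hsumO i i, ← hcard i]
        have hsub : ({0, (O i).card / 2} : Finset ℕ) ⊆ Finset.range (O i).card := by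
          intro x hx
          simp only [Finset.mem_insert, Finset.mem_singleton] at hx
          rcases hx with rfl | rfl <;> simp only [Finset.mem_range] <;> omega
        have hzeros : ∀ x ∈ Finset.range (O i).card,
            x ∉ ({0, (O i).card / 2} : Finset ℕ) → A ((μ ^ x) i) i = 0 := by
          intro x hx hxn
          simp only [Finset.mem_insert, Finset.mem_singleton, not_or] at hxn
          have hxlt := Finset.mem_range.mp hx
          have hxm : x % (O i).card = x := Nat.mod_eq_of_lt hxlt
          exact hrest x (by rw [hxm]; exact hxn.1) (by rw [hxm]; exact hxn.2)
        rw [← Finset.sum_subset hsub hzeros,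
          Finset.sum_pair (by omega : (0 : ℕ) ≠ (O i).card / 2)]
        simp only [pow_zero, Equiv.Perm.coe_one, id_eq, hdiag, hhalf]
        norm_num
      rw [hone, hs2]; norm_num
  -- distinctness of orbits of distinct representatives
  have hpne : ∀ i ∈ Irep, ∀ j ∈ Irep, i ≠ j → ∀ p ∈ O i, p ≠ j := by
    intro i hi j hj hij p hp hpj
    subst hpj
    obtain ⟨u, -, hu⟩ := hIrep p
    exact hij ((hu i ⟨hi, hp⟩).trans (hu p ⟨hj, hmem p⟩).symm)
  have hspos : ∀ i, (0 : ℤ) < s i := fun i => by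
    rcases hs i with ⟨h, -⟩ | ⟨h, -⟩ <;> omega
  have hs0 : ∀ i, s i ≠ 0 := fun i => (hspos i).ne'
  -- off-diagonal entries nonpositive
  have hoffsum : ∀ i ∈ Irep, ∀ j ∈ Irep, i ≠ j → s i * ∑ p ∈ O i, A p j ≤ 0 := by
    intro i hi j hj hij
    have h1 : ∑ p ∈ O i, A p j ≤ 0 :=
      Finset.sum_nonpos fun p hp => hoff p j (hpne i hi j hj hij p hp)
    exact mul_nonpos_iff.mpr (Or.inl ⟨(hspos i).le, h1⟩)
  -- inverse powers
  have hinv : ∀ (k : ℕ) (x : I), (μ ^ (N * (k + 1) - k)) ((μ ^ k) x) = x := by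
    intro k x
    have h2 : k + 1 ≤ N * (k + 1) := Nat.le_mul_of_pos_left _ hN0
    have h1 : N * (k + 1) - k + k = N * (k + 1) := by omega
    have hmul : (μ ^ (N * (k + 1) - k)) * (μ ^ k) = 1 := by
      rw [← pow_add, h1, pow_mul, hμN, one_pow]
    calc (μ ^ (N * (k + 1) - k)) ((μ ^ k) x)
        = ((μ ^ (N * (k + 1) - k)) * (μ ^ k)) x := rfl
      _ = x := by rw [hmul]; rfl
  -- symmetry of vanishing
  have hAzs : ∀ i j : I, (∀ p ∈ O i, A p j = 0) → ∀ q ∈ O j, A q i = 0 := by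
    intro i j h q hq
    obtain ⟨k, rfl⟩ := (hO j q).1 hq
    rw [hzero]
    have h2 := hμpow (N * (k + 1) - k) i ((μ ^ k) j)
    rw [hinv k j] at h2
    rw [← h2]
    exact h _ (horb i _)
  have hzeroiff : ∀ i ∈ Irep, ∀ j ∈ Irep,
      (s i * ∑ p ∈ O i, A p j = 0 ↔ s j * ∑ p ∈ O j, A p i = 0) := by
    intro i hi j hj
    by_cases hij : i = j
    · subst hij; exact Iff.rfl
    · have key : ∀ a ∈ Irep, ∀ b ∈ Irep, a ≠ b →
          (s a * ∑ p ∈ O a, A p b = 0 ↔ ∀ p ∈ O a, A p b = 0) := by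
        intro a ha b hb hab
        rw [mul_eq_zero, or_iff_right (hs0 a),
          Finset.sum_eq_zero_iff_of_nonpos
            (fun p hp => hoff p b (hpne a ha b hb hab p hp))]
      rw [key i hi j hj hij, key j hj i hi (Ne.symm hij)]
      exact ⟨hAzs i j, hAzs j i⟩
  -- positivity of the symmetrizing coefficients
  have hpos : ∀ i ∈ Irep, 0 < ((N : ℚ) * (r i : ℚ)) / ((s i : ℚ) * ((O i).card : ℚ)) := by
    intro i _
    apply div_pos
    · exact mul_pos (by exact_mod_cast hN0) (by exact_mod_cast hr i)
    · refine mul_pos (by exact_mod_cast hspos i) ?_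
      have h : 0 < (O i).card := Finset.card_pos.mpr ⟨i, hmem i⟩
      exact_mod_cast h
  -- sums over range N
  have hTsum : ∀ i j : I, ∑ k ∈ Finset.range N, A ((μ ^ k) i) j
      = ((N / m i : ℕ) : ℤ) * ∑ k ∈ Finset.range (m i), A ((μ ^ k) i) j := by
    intro i j
    calc ∑ k ∈ Finset.range N, A ((μ ^ k) i) j
        = ∑ k ∈ Finset.range (m i * (N / m i)), A ((μ ^ k) i) j := by
          rw [Nat.mul_div_cancel' (hmdvd i)]
      _ = ((N / m i : ℕ) : ℤ) * ∑ k ∈ Finset.range (m i), A ((μ ^ k) i) j := by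
          exact sum_range_mul_periodic _ _ _
            (fun k => by rw [pow_add]; simp [Equiv.Perm.mul_apply, hmfix i])
  -- reindexing the sum over range N
  have hflip : ∀ i j : I, ∑ k ∈ Finset.range N, A j ((μ ^ k) i)
      = ∑ k ∈ Finset.range N, A ((μ ^ k) j) i := by
    intro i j
    refine Finset.sum_nbij' (fun k => (N - k) % N) (fun k => (N - k) % N)
      ?_ ?_ ?_ ?_ ?_
    · intro a _; exact Finset.mem_range.mpr (Nat.mod_lt _ hN0)
    · intro a _; exact Finset.mem_range.mpr (Nat.mod_lt _ hN0)
    · intro a ha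
      have ha' := Finset.mem_range.mp ha
      show (N - (N - a) % N) % N = a
      rcases Nat.eq_zero_or_pos a with rfl | hpos0
      · simp [Nat.mod_self]
      · rw [Nat.mod_eq_of_lt (by omega : N - a < N),
          (by omega : N - (N - a) = a)]
        exact Nat.mod_eq_of_lt ha'
    · intro a ha
      have ha' := Finset.mem_range.mp ha
      show (N - (N - a) % N) % N = a
      rcases Nat.eq_zero_or_pos a with rfl | hpos0
      · simp [Nat.mod_self]
      · rw [Nat.mod_eq_of_lt (by omega : N - a < N),
          (by omega : N - (N - a) = a)]
        exact Nat.mod_eq_of_lt ha'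
    · intro k hk
      have hk' := Finset.mem_range.mp hk
      have h2 := hμpow (N * (k + 1) - k) j ((μ ^ k) i)
      rw [hinv k i] at h2
      have e1 : N * (k + 1) - k = (N - k) + N * k := by
        have h1 : N * (k + 1) = N * k + N := Nat.mul_succ N k
        omega
      have h4 : μ ^ (N * (k + 1) - k) = μ ^ ((N - k) % N) := by
        rw [e1, pow_add, pow_mul, hμN, one_pow, mul_one, ← hN, pow_mod_orderOf]
      rw [← h4]
      exact h2.symm
  -- the integer symmetrizability identity
  have hintsym : ∀ i j : I,
      ((N / m i : ℕ) : ℤ) * (r i * ∑ p ∈ O i, A p j)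
        = ((N / m j : ℕ) : ℤ) * (r j * ∑ p ∈ O j, A p i) := by
    intro i j
    have step1 : r i * ∑ k ∈ Finset.range N, A ((μ ^ k) i) j
        = r j * ∑ k ∈ Finset.range N, A ((μ ^ k) j) i := by
      rw [← hflip i j, Finset.mul_sum, Finset.mul_sum]
      refine Finset.sum_congr rfl fun k _ => ?_
      rw [← hrpow k i, hsym]
    calc ((N / m i : ℕ) : ℤ) * (r i * ∑ p ∈ O i, A p j)
        = r i * ∑ k ∈ Finset.range N, A ((μ ^ k) i) j := by
          rw [hTsum i j, hsumO i j]; ring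
      _ = r j * ∑ k ∈ Finset.range N, A ((μ ^ k) j) i := step1
      _ = ((N / m j : ℕ) : ℤ) * (r j * ∑ p ∈ O j, A p i) := by
          rw [hTsum j i, hsumO j i]; ring
  refine ⟨fun i _ => hdsum i, hoffsum, hzeroiff, hpos, ?_⟩
  intro i _ j _
  have hZ : (N : ℤ) * (r i * ∑ p ∈ O i, A p j) * (m j : ℤ)
      = (N : ℤ) * (r j * ∑ p ∈ O j, A p i) * (m i : ℤ) := by
    have h1 := hintsym i j
    have h2 : ((N / m i : ℕ) : ℤ) * (m i : ℤ) = (N : ℤ) := by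
      exact_mod_cast congrArg (Nat.cast : ℕ → ℤ) (Nat.div_mul_cancel (hmdvd i))
    have h3 : ((N / m j : ℕ) : ℤ) * (m j : ℤ) = (N : ℤ) := by
      exact_mod_cast congrArg (Nat.cast : ℕ → ℤ) (Nat.div_mul_cancel (hmdvd j))
    linear_combination ((m i : ℤ) * (m j : ℤ)) * h1
      - (r i * (∑ p ∈ O i, A p j) * (m j : ℤ)) * h2
      + (r j * (∑ p ∈ O j, A p i) * (m i : ℤ)) * h3
  have hZQ : (N : ℚ) * ((r i : ℚ) * ((∑ p ∈ O i, A p j : ℤ) : ℚ)) * ((m j : ℕ) : ℚ)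
      = (N : ℚ) * ((r j : ℚ) * ((∑ p ∈ O j, A p i : ℤ) : ℚ)) * ((m i : ℕ) : ℚ) := by
    exact_mod_cast hZ
  rw [hcard i, hcard j]
  have hsiq : ((s i : ℤ) : ℚ) ≠ 0 := by exact_mod_cast hs0 i
  have hsjq : ((s j : ℤ) : ℚ) ≠ 0 := by exact_mod_cast hs0 j
  have hmiq : ((m i : ℕ) : ℚ) ≠ 0 := by exact_mod_cast (hm0 i).ne'
  have hmjq : ((m j : ℕ) : ℚ) ≠ 0 := by exact_mod_cast (hm0 j).ne'
  field_simp
  push_cast at hZQ ⊢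
  have hNq : (N : ℚ) ≠ 0 := by exact_mod_cast hN0.ne'
  have hZQ' : ((r i : ℚ) * ∑ x ∈ O i, (A x j : ℚ)) * (m j : ℚ)
      = ((r j : ℚ) * ∑ x ∈ O j, (A x i : ℚ)) * (m i : ℚ) :=
    mul_left_cancel₀ hNq (by linear_combination hZQ)
  linear_combination ((s i : ℚ) * (s j : ℚ)) * hZQ'
end
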